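/- Let R be a commutative differential graded algebra over a field k, with differential d, and let M be a dg R-module whose underlying graded module is projective over the underlying graded algebra. Given a connection ∇ : M → Ω¹_R ⊗_R M (i.e. a k-linear map satisfying the graded Leibniz rule ∇(r·m) = (d_dR r)·m + (-1)^{|r|} r·∇m), the Atiyah class At(∇) := ∇ ∘ d_M − d_{Ω¹⊗M} ∘ ∇ is closed: d_{Ω¹⊗End M} At(∇) = 0. -/
import Mathlib


/-!
STATEMENT 0. A commutative dg algebra `R` over a field `k` is encoded with a parity
involution `ε` (so that `(-1)^{|r|} • r = ε r` for homogeneous `r`, the standard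
"superalgebra via involution" encoding of Koszul signs), a square-zero differential
`dR` satisfying the graded Leibniz rule.  `M` is a dg `R`-module, projective over the
underlying graded algebra, `Ω1` plays the role of the Kähler differentials `Ω¹_R`
with universal derivation `ddr`, and `N` plays the role of `Ω¹_R ⊗_R M` with its
induced differential `dN`; `pair ω m` is the element `ω ⊗ m`.  A connection
`conn : M → Ω¹_R ⊗_R M` satisfies `∇(r • m) = (d_dR r) ⊗ m + (-1)^{|r|} r • ∇ m`.
The Atiyah class `At(∇) = ∇ ∘ d_M − d_{Ω¹⊗M} ∘ ∇` is a degree‑1 element of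
`Ω¹_R ⊗ End M`; its differential is the graded commutator `[d, At] = d_N ∘ At + At ∘ d_M`,
and the claim is that this vanishes: the Atiyah class is closed.
-/
theorem atiyah_class_closed
    {k : Type} [Field k]
    (R : Type) [CommRing R] [Algebra k R]
    (ε : R →ₐ[k] R) (hεε : ∀ r, ε (ε r) = r)
    (dR : R →ₗ[k] R) (hdR2 : ∀ r, dR (dR r) = 0)
    (hdRodd : ∀ r, ε (dR r) = - dR (ε r))
    (hdRleib : ∀ a b, dR (a * b) = dR a * b + ε a * dR b)
    (M : Type) [AddCommGroup M] [Module k M] [Module R M] [IsScalarTower k R M]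
    (hproj : Module.Projective R M)
    (εM : M →ₗ[k] M) (hεM : ∀ m, εM (εM m) = m)
    (hεMsmul : ∀ (r : R) (m : M), εM (r • m) = ε r • εM m)
    (dM : M →ₗ[k] M) (hdM2 : ∀ m, dM (dM m) = 0)
    (hdMleib : ∀ (r : R) (m : M), dM (r • m) = dR r • m + ε r • dM m)
    (Ω1 : Type) [AddCommGroup Ω1] [Module k Ω1] [Module R Ω1] [IsScalarTower k R Ω1]
    (ddr : R →ₗ[k] Ω1)
    (hddr : ∀ a b : R, ddr (a * b) = a • ddr b + b • ddr a)
    (N : Type) [AddCommGroup N] [Module k N] [Module R N] [IsScalarTower k R N]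
    (pair : Ω1 →ₗ[k] M →ₗ[k] N)
    (dN : N →ₗ[k] N) (hdN2 : ∀ x, dN (dN x) = 0)
    (conn : M →ₗ[k] N)
    (hconn : ∀ (r : R) (m : M), conn (r • m) = pair (ddr r) m + ε r • conn m) :
    ∀ m : M,
      dN (conn (dM m) - dN (conn m)) + (conn (dM (dM m)) - dN (conn (dM m))) = 0 := by
  intro m
  simp [map_sub, hdN2, hdM2]
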